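/- arXiv:math/0502402 — 2 statements merged into one kernel-verified Lean document; each statement's English description precedes it below -/
import Mathlib

section
/- Let Y = X ∪ α ⊂ ℝ², where X = ⋃_{n≥2} C_n is the union of the triangle boundaries C_n with vertices (0,0), (1/n,1), (1/n,1) + 10^{-10n}(n,−1), and α is the segment from (0,0) to (0,1). Then Y is a compact, path connected metric space that is not locally path connected (it fails to be locally path connected at points of α other than (0,0)). -/
open unitInterval Topology

noncomputable section

/-- The topological fundamental group: path components of the based loop space
(compact-open topology), with the quotient topology. -/
def piTop (Z : Type*) [TopologicalSpace Z] (z : Z) : Type _ :=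
  Quotient (pathSetoid (Path z z))

instance (Z : Type*) [TopologicalSpace Z] (z : Z) : TopologicalSpace (piTop Z z) :=
  instTopologicalSpaceQuotient

/-- The class of a loop in the topological fundamental group. -/
def piMk {Z : Type*} [TopologicalSpace Z] {z : Z} (γ : Path z z) : piTop Z z :=
  Quotient.mk _ γ

/-- The common basepoint `p = (0,0)`. -/
def pp : ℝ × ℝ := (0, 0)

/-- The apex `(1/n, 1)` of the `n`-th triangle. -/
def apex (n : ℕ) : ℝ × ℝ := (1 / (n : ℝ), 1)

/-- The third vertex `(1/n,1) + 10^{-10n}·(n,-1)` of the `n`-th triangle. -/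
def apex' (n : ℕ) : ℝ × ℝ := apex n + (((10 : ℝ) ^ (10 * n))⁻¹) • ((n : ℝ), -1)

/-- The boundary of the `n`-th triangle, i.e. the union of its three edges. -/
def Cset (n : ℕ) : Set (ℝ × ℝ) :=
  segment ℝ pp (apex n) ∪ segment ℝ (apex n) (apex' n) ∪ segment ℝ (apex' n) pp

/-- The bouquet `X = ⋃_{n ≥ 2} C_n`. -/
def Xset : Set (ℝ × ℝ) := ⋃ n ∈ {n : ℕ | 2 ≤ n}, Cset n

/-- The segment `α` from `(0,0)` to `(0,1)`. -/
def alphaSet : Set (ℝ × ℝ) := segment ℝ (0, 0) (0, 1)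

/-- The compactification `Y = X ∪ α`. -/
def Yset : Set (ℝ × ℝ) := Xset ∪ alphaSet

lemma pp_mem_C (n : ℕ) : pp ∈ Cset n := Or.inl (Or.inl (left_mem_segment ℝ _ _))

lemma pp_mem_X : pp ∈ Xset :=
  Set.mem_biUnion (by norm_num : (2 : ℕ) ∈ {n : ℕ | 2 ≤ n}) (pp_mem_C 2)

lemma X_sub_Y : Xset ⊆ Yset := Set.subset_union_left

lemma pp_mem_Y : pp ∈ Yset := X_sub_Y pp_mem_X

/-- The basepoint of `X`. -/
def pX : ↥Xset := ⟨pp, pp_mem_X⟩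

/-- The basepoint of `Y`. -/
def pY : ↥Yset := ⟨pp, pp_mem_Y⟩

/-- The inclusion `X ↪ Y` as a continuous map between subspaces. -/
def jXY : C(↥Xset, ↥Yset) := ⟨Set.inclusion X_sub_Y, continuous_inclusion X_sub_Y⟩

lemma jXY_pX : jXY pX = pY := rfl

-- helpers
def eN (n : ℕ) : ℝ := ((10 : ℝ) ^ (10 * n))⁻¹

lemma eN_pos (n : ℕ) : 0 < eN n := by unfold eN; positivity

lemma eN_small {n : ℕ} (hn : 1 ≤ n) : (n : ℝ) ^ 3 * eN n < 1 := by
  have h1 : n ^ 3 < 10 ^ (10 * n) := by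
    calc n ^ 3 < (2 ^ n) ^ 3 := Nat.pow_lt_pow_left (Nat.lt_two_pow_self) (by norm_num)
    _ = 2 ^ (n * 3) := by rw [← pow_mul]
    _ ≤ 10 ^ (n * 3) := Nat.pow_le_pow_left (by norm_num) _
    _ ≤ 10 ^ (10 * n) := Nat.pow_le_pow_right (by norm_num) (by omega)
  have h2 : ((n : ℝ)) ^ 3 < (10 : ℝ) ^ (10 * n) := by exact_mod_cast h1
  have h3 : (0 : ℝ) < (10 : ℝ) ^ (10 * n) := by positivity
  rw [eN, mul_inv_lt_iff₀ h3, one_mul]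
  exact h2

lemma eN_lt_one {n : ℕ} (hn : 2 ≤ n) : eN n < 1 := by
  by_contra hc
  push_neg at hc
  have hn' : (2 : ℝ) ≤ (n : ℝ) := by exact_mod_cast hn
  have h := eN_small (by omega : 1 ≤ n)
  have h8 : (2:ℝ)^3 ≤ (n:ℝ)^3 := pow_le_pow_left₀ (by norm_num) hn' 3
  nlinarith [mul_le_mul_of_nonneg_left hc (by positivity : (0:ℝ) ≤ (n:ℝ)^3)]

lemma apex'_eq (n : ℕ) :
    apex' n = (1 / (n : ℝ) + (n : ℝ) * eN n, 1 - eN n) := by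
  simp [apex', apex, eN, Prod.ext_iff]
  constructor <;> ring

/-- Convex region containing the `n`-th triangle. -/
def Hs (n : ℕ) : Set (ℝ × ℝ) :=
  {q | 0 ≤ q.2 ∧ q.2 ≤ 1 ∧ q.2 ≤ n * q.1 ∧
    q.1 * (1 - eN n) ≤ q.2 * (1 / n + n * eN n) ∧ q.1 ≤ 1 / n + n * eN n}

lemma convex_Hs (n : ℕ) : Convex ℝ (Hs n) := by
  rintro q ⟨hq1, hq2, hq3, hq4, hq5⟩ r ⟨hr1, hr2, hr3, hr4, hr5⟩ a b ha hb hab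
  simp only [Hs, Set.mem_setOf_eq, Prod.fst_add, Prod.snd_add, Prod.smul_fst, Prod.smul_snd,
    smul_eq_mul]
  have hc : a*(1/↑n + ↑n*eN n) + b*(1/↑n + ↑n*eN n) = 1/↑n + ↑n*eN n := by
    rw [← add_mul, hab, one_mul]
  refine ⟨by nlinarith, by nlinarith, by nlinarith, by nlinarith,
    by linarith [mul_le_mul_of_nonneg_left hq5 ha, mul_le_mul_of_nonneg_left hr5 hb]⟩

lemma pp_mem_Hs (n : ℕ) : pp ∈ Hs n := by
  have := eN_pos n
  have h0 : (0:ℝ) ≤ 1 / n := by positivity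
  have h1 : (0:ℝ) ≤ (n:ℝ) * eN n := by positivity
  simp only [Hs, pp, Set.mem_setOf_eq]
  norm_num
  positivity

lemma apex_mem_Hs {n : ℕ} (hn : 2 ≤ n) : apex n ∈ Hs n := by
  have he := eN_pos n
  have he1 := eN_lt_one hn
  have hn' : (2:ℝ) ≤ (n:ℝ) := by exact_mod_cast hn
  have hinv : (n:ℝ) * (1 / n) = 1 := by field_simp
  simp only [Hs, apex, Set.mem_setOf_eq]
  have h0 : (0:ℝ) ≤ 1 / n := by positivity
  refine ⟨by norm_num, le_refl _, by linarith, ?_, by nlinarith⟩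
  have : (1:ℝ)/n * (1 - eN n) ≤ 1/n := by nlinarith
  nlinarith

lemma apex'_mem_Hs {n : ℕ} (hn : 2 ≤ n) : apex' n ∈ Hs n := by
  have he := eN_pos n
  have he1 := eN_lt_one hn
  have hn' : (2:ℝ) ≤ (n:ℝ) := by exact_mod_cast hn
  have hinv : (n:ℝ) * (1 / n) = 1 := by field_simp
  rw [apex'_eq]
  simp only [Hs, Set.mem_setOf_eq]
  have hnn : (0:ℝ) ≤ (n:ℝ)*((n:ℝ)*eN n) := by positivity
  refine ⟨by linarith, by linarith, by nlinarith [hinv, hnn], by nlinarith, le_refl _⟩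

lemma Cset_subset_Hs {n : ℕ} (hn : 2 ≤ n) : Cset n ⊆ Hs n := by
  have hc := convex_Hs n
  refine Set.union_subset (Set.union_subset ?_ ?_) ?_ <;>
    exact hc.segment_subset (by first
      | exact pp_mem_Hs n | exact apex_mem_Hs hn | exact apex'_mem_Hs hn)
      (by first | exact pp_mem_Hs n | exact apex_mem_Hs hn | exact apex'_mem_Hs hn)

lemma mem_alphaSet_iff {q : ℝ × ℝ} : q ∈ alphaSet ↔ q.1 = 0 ∧ 0 ≤ q.2 ∧ q.2 ≤ 1 := by
  constructor
  · rintro ⟨a, b, ha, hb, hab, rfl⟩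
    simp only [Prod.fst_add, Prod.snd_add, Prod.smul_fst, Prod.smul_snd, smul_eq_mul]
    norm_num
    constructor
    · linarith
    · linarith
  · rintro ⟨h1, h2, h3⟩
    refine ⟨1 - q.2, q.2, by linarith, h2, by ring, ?_⟩
    have : ((1 - q.2) • ((0:ℝ), (0:ℝ)) + q.2 • ((0:ℝ), (1:ℝ))) = (0, q.2) := by
      simp [Prod.ext_iff]
    rw [this]
    exact Prod.ext h1.symm rfl

lemma Hs_zero {n : ℕ} (hn : 2 ≤ n) {q : ℝ × ℝ} (hq : q ∈ Hs n) (h2 : q.2 = 0) :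
    q = (0, 0) := by
  obtain ⟨hq1, hq2, hq3, hq4, hq5⟩ := hq
  have he := eN_pos n
  have he1 := eN_lt_one hn
  have hn' : (2:ℝ) ≤ (n:ℝ) := by exact_mod_cast hn
  have hx0 : 0 ≤ q.1 := by nlinarith
  have hx1 : q.1 ≤ 0 := by nlinarith
  have : q.1 = 0 := le_antisymm hx1 hx0
  exact Prod.ext this h2

lemma Hs_disj {n m : ℕ} (hn : 2 ≤ n) (hnm : n < m) {q : ℝ × ℝ}
    (hqn : q ∈ Hs n) (hqm : q ∈ Hs m) : q = (0, 0) := by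
  obtain ⟨h1, h2, h3, h4, h5⟩ := hqn
  obtain ⟨g1, g2, g3, g4, g5⟩ := hqm
  have hm2 : 2 ≤ m := by omega
  have he := eN_pos m
  have he1 := eN_lt_one hm2
  have hem := eN_small (by omega : 1 ≤ m)
  have hn' : (2:ℝ) ≤ (n:ℝ) := by exact_mod_cast hn
  have hm' : (3:ℝ) ≤ (m:ℝ) := by exact_mod_cast (by omega : 3 ≤ m)
  have hmn : (n:ℝ) + 1 ≤ (m:ℝ) := by exact_mod_cast (by omega : n + 1 ≤ m)
  have hinv : (m:ℝ) * (1 / m) = 1 := by field_simp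
  refine Hs_zero hn ⟨h1, h2, h3, h4, h5⟩ ?_
  by_contra hy
  have hy : 0 < q.2 := lt_of_le_of_ne h1 (Ne.symm hy)
  -- q.2 * (1 - eN m) ≤ n * (q.1 * (1 - eN m)) ≤ n * (q.2 * (1/m + m * eN m))
  have s1 : q.2 * (1 - eN m) ≤ (n:ℝ) * (q.1 * (1 - eN m)) := by nlinarith
  have s2 : (n:ℝ) * (q.1 * (1 - eN m)) ≤ (n:ℝ) * (q.2 * (1 / m + m * eN m)) := by
    apply mul_le_mul_of_nonneg_left g4 (by linarith)
  have s3 : q.2 * (1 - eN m) ≤ q.2 * ((n:ℝ) * (1 / m + m * eN m)) := by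
    calc q.2 * (1 - eN m) ≤ (n:ℝ) * (q.2 * (1 / m + m * eN m)) := le_trans s1 s2
    _ = q.2 * ((n:ℝ) * (1 / m + m * eN m)) := by ring
  have s4 : (1 - eN m) ≤ (n:ℝ) * (1 / m + m * eN m) := le_of_mul_le_mul_left
    (by linarith [s3]) hy
  -- now derive contradiction
  have s5 : (n:ℝ) * (1 / m + m * eN m) ≤ ((m:ℝ) - 1) * (1 / m + m * eN m) := by
    apply mul_le_mul_of_nonneg_right (by linarith)
    positivity
  have s6 : 1/(m:ℝ) ≤ ((m:ℝ)^2 - m + 1) * eN m := by nlinarith [s4, s5, hinv]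
  have s7 : (1:ℝ) ≤ (m:ℝ) * (((m:ℝ)^2 - m + 1) * eN m) := by
    calc (1:ℝ) = (m:ℝ) * (1/m) := hinv.symm
    _ ≤ _ := mul_le_mul_of_nonneg_left s6 (by linarith)
  nlinarith [s7, mul_nonneg (mul_nonneg (by linarith : (0:ℝ) ≤ (m:ℝ)) he.le)
    (by linarith : (0:ℝ) ≤ (m:ℝ) - 1)]

lemma Cset_inter_Cset {n m : ℕ} (hn : 2 ≤ n) (hm : 2 ≤ m) (hne : n ≠ m) {q : ℝ × ℝ}
    (hqn : q ∈ Cset n) (hqm : q ∈ Cset m) : q = (0, 0) := by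
  rcases lt_or_gt_of_ne hne with h | h
  · exact Hs_disj hn h (Cset_subset_Hs hn hqn) (Cset_subset_Hs hm hqm)
  · exact Hs_disj hm h (Cset_subset_Hs hm hqm) (Cset_subset_Hs hn hqn)

lemma Cset_inter_alpha {n : ℕ} (hn : 2 ≤ n) {q : ℝ × ℝ}
    (hqn : q ∈ Cset n) (hqa : q ∈ alphaSet) : q = (0, 0) := by
  obtain ⟨h1, h2, h3⟩ := mem_alphaSet_iff.mp hqa
  obtain ⟨g1, g2, g3, g4, g5⟩ := Cset_subset_Hs hn hqn
  have hn' : (2:ℝ) ≤ (n:ℝ) := by exact_mod_cast hn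
  have : q.2 = 0 := le_antisymm (by rw [h1] at g3; simpa using g3) g1
  exact Prod.ext h1 this

lemma Hs_bound {n : ℕ} (hn : 2 ≤ n) {q : ℝ × ℝ} (hq : q ∈ Hs n) :
    0 ≤ q.1 ∧ q.1 ≤ 2 / n ∧ 0 ≤ q.2 ∧ q.2 ≤ 1 := by
  obtain ⟨h1, h2, h3, h4, h5⟩ := hq
  have he := eN_pos n
  have hem := eN_small (by omega : 1 ≤ n)
  have hn' : (2:ℝ) ≤ (n:ℝ) := by exact_mod_cast hn
  have hinv : (n:ℝ) * (1 / n) = 1 := by field_simp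
  have hx0 : 0 ≤ q.1 := by nlinarith
  have hkey : (n:ℝ) * eN n ≤ 1 / n := by
    rw [le_div_iff₀ (by linarith : (0:ℝ) < (n:ℝ))]
    nlinarith [hem, mul_nonneg (mul_nonneg (sq_nonneg (n:ℝ))
      (by linarith : (0:ℝ) ≤ (n:ℝ) - 1)) he.le]
  refine ⟨hx0, ?_, h1, h2⟩
  have : (2:ℝ)/n = 1/n + 1/n := by ring
  linarith [h5, hkey, this]

lemma two_div_le_one {n : ℕ} (hn : 2 ≤ n) : (2:ℝ) / n ≤ 1 := by
  have hn' : (2:ℝ) ≤ (n:ℝ) := by exact_mod_cast hn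
  rw [div_le_one (by linarith)]
  exact hn'

lemma isCompact_seg (a b : ℝ × ℝ) : IsCompact (segment ℝ a b) := by
  rw [segment_eq_image']
  exact isCompact_Icc.image (by fun_prop)

lemma isCompact_Cset (n : ℕ) : IsCompact (Cset n) :=
  ((isCompact_seg _ _).union (isCompact_seg _ _)).union (isCompact_seg _ _)

lemma isClosed_union_general (T : Set ℕ) (hT : ∀ n ∈ T, 2 ≤ n) :
    IsClosed (alphaSet ∪ ⋃ n ∈ T, Cset n) := by
  set W := alphaSet ∪ ⋃ n ∈ T, Cset n with hW
  have hK0 : IsClosed {q : ℝ × ℝ | 0 ≤ q.1 ∧ 0 ≤ q.2 ∧ q.2 ≤ 1} := by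
    apply IsClosed.inter (isClosed_le continuous_const continuous_fst)
    exact IsClosed.inter (isClosed_le continuous_const continuous_snd)
      (isClosed_le continuous_snd continuous_const)
  have hsub : W ⊆ {q : ℝ × ℝ | 0 ≤ q.1 ∧ 0 ≤ q.2 ∧ q.2 ≤ 1} := by
    rintro q (hq | hq)
    · obtain ⟨h1, h2, h3⟩ := mem_alphaSet_iff.mp hq
      exact ⟨le_of_eq h1.symm, h2, h3⟩
    · simp only [Set.mem_iUnion, exists_prop] at hq
      obtain ⟨n, hnT, hc⟩ := hq
      obtain ⟨b1, _, b3, b4⟩ := Hs_bound (hT n hnT) (Cset_subset_Hs (hT n hnT) hc)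
      exact ⟨b1, b3, b4⟩
  refine isClosed_of_closure_subset fun q hq => ?_
  have hqK : 0 ≤ q.1 ∧ 0 ≤ q.2 ∧ q.2 ≤ 1 := closure_minimal hsub hK0 hq
  rcases eq_or_lt_of_le hqK.1 with h0 | hpos
  · exact Or.inl (mem_alphaSet_iff.mpr ⟨h0.symm, hqK.2⟩)
  · obtain ⟨N, hN⟩ := exists_nat_gt (4 / q.1)
    have hN0 : (0:ℝ) < N := lt_of_le_of_lt (by positivity) hN
    have hWd : W = (alphaSet ∪ ⋃ n ∈ T ∩ Set.Ici N, Cset n) ∪ ⋃ n ∈ T ∩ Set.Iio N, Cset n := by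
      rw [hW]
      ext x
      simp only [Set.mem_union, Set.mem_iUnion, exists_prop, Set.mem_inter_iff, Set.mem_Ici,
        Set.mem_Iio]
      constructor
      · rintro (h | ⟨n, hnT, hc⟩)
        · exact Or.inl (Or.inl h)
        · rcases lt_or_ge n N with h' | h'
          · exact Or.inr ⟨n, ⟨hnT, h'⟩, hc⟩
          · exact Or.inl (Or.inr ⟨n, ⟨hnT, h'⟩, hc⟩)
      · rintro ((h | ⟨n, ⟨hnT, _⟩, hc⟩) | ⟨n, ⟨hnT, _⟩, hc⟩)
        · exact Or.inl h
        · exact Or.inr ⟨n, hnT, hc⟩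
        · exact Or.inr ⟨n, hnT, hc⟩
    rw [hWd, closure_union] at hq
    rcases hq with hq | hq
    · exfalso
      have hhalf : IsClosed {x : ℝ × ℝ | x.1 ≤ q.1 / 2} :=
        isClosed_le continuous_fst continuous_const
      have hGsub : (alphaSet ∪ ⋃ n ∈ T ∩ Set.Ici N, Cset n) ⊆ {x : ℝ × ℝ | x.1 ≤ q.1 / 2} := by
        rintro x (hx | hx)
        · have := (mem_alphaSet_iff.mp hx).1
          simp only [Set.mem_setOf_eq, this]
          linarith
        · simp only [Set.mem_iUnion, exists_prop, Set.mem_inter_iff, Set.mem_Ici] at hx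
          obtain ⟨n, ⟨hnT, hnN⟩, hc⟩ := hx
          have hn2 := hT n hnT
          obtain ⟨_, b2, _, _⟩ := Hs_bound hn2 (Cset_subset_Hs hn2 hc)
          have hn' : (N:ℝ) ≤ (n:ℝ) := by exact_mod_cast hnN
          have h2n : (2:ℝ)/n ≤ 2/N := by
            apply div_le_div_of_nonneg_left (by norm_num) hN0 hn'
          have h2N : (2:ℝ)/N ≤ q.1 / 2 := by
            rw [div_le_div_iff₀ hN0 (by norm_num)]
            rw [div_lt_iff₀ hpos] at hN
            linarith
          simp only [Set.mem_setOf_eq]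
          linarith
      have := closure_minimal hGsub hhalf hq
      simp only [Set.mem_setOf_eq] at this
      linarith
    · have hcl : IsClosed (⋃ n ∈ T ∩ Set.Iio N, Cset n) := by
        apply Set.Finite.isClosed_biUnion ((Set.finite_Iio N).subset Set.inter_subset_right)
        exact fun n _ => (isCompact_Cset n).isClosed
      rw [hcl.closure_eq] at hq
      simp only [Set.mem_iUnion, exists_prop, Set.mem_inter_iff] at hq
      obtain ⟨n, ⟨hnT, _⟩, hc⟩ := hq
      exact Or.inr (Set.mem_biUnion hnT hc)

lemma Yset_eq : Yset = alphaSet ∪ ⋃ n ∈ {n : ℕ | 2 ≤ n}, Cset n := by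
  rw [Yset, Xset, Set.union_comm]

lemma isClosed_Yset : IsClosed Yset := by
  rw [Yset_eq]
  exact isClosed_union_general _ fun n hn => hn

lemma isCompact_Yset : IsCompact Yset := by
  refine IsCompact.of_isClosed_subset (isCompact_Icc (a := ((0:ℝ),(0:ℝ))) (b := (1,1)))
    isClosed_Yset ?_
  rintro q (hq | hq)
  · simp only [Xset, Set.mem_iUnion, exists_prop] at hq
    obtain ⟨n, hn2, hc⟩ := hq
    obtain ⟨b1, b2, b3, b4⟩ := Hs_bound hn2 (Cset_subset_Hs hn2 hc)
    exact ⟨⟨b1, b3⟩, ⟨le_trans b2 (two_div_le_one hn2), b4⟩⟩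
  · obtain ⟨h1, h2, h3⟩ := mem_alphaSet_iff.mp hq
    exact ⟨⟨le_of_eq h1.symm, h2⟩, ⟨by rw [h1]; norm_num, h3⟩⟩

lemma isPathConnected_Cset (n : ℕ) : IsPathConnected (Cset n) := by
  have h1 : IsPathConnected (segment ℝ pp (apex n)) :=
    (convex_segment _ _).isPathConnected ⟨pp, left_mem_segment _ _ _⟩
  have h2 : IsPathConnected (segment ℝ (apex n) (apex' n)) :=
    (convex_segment _ _).isPathConnected ⟨apex n, left_mem_segment _ _ _⟩
  have h3 : IsPathConnected (segment ℝ (apex' n) pp) :=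
    (convex_segment _ _).isPathConnected ⟨pp, right_mem_segment _ _ _⟩
  refine IsPathConnected.union (h1.union h2 ⟨apex n, right_mem_segment _ _ _,
    left_mem_segment _ _ _⟩) h3 ⟨apex' n, Or.inr (right_mem_segment _ _ _),
    left_mem_segment _ _ _⟩

lemma isPathConnected_Yset : IsPathConnected Yset := by
  refine ⟨pp, Or.inr ?_, fun {q} hq => ?_⟩
  · exact left_mem_segment _ _ _
  · rcases hq with hq | hq
    · simp only [Xset, Set.mem_iUnion, exists_prop] at hq
      obtain ⟨n, hn2, hc⟩ := hq
      exact JoinedIn.mono ((isPathConnected_Cset n).joinedIn pp (pp_mem_C n) q hc)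
        fun x hx => Or.inl (Set.mem_biUnion hn2 hx)
    · have hα : IsPathConnected alphaSet :=
        (convex_segment _ _).isPathConnected ⟨(0,0), left_mem_segment _ _ _⟩
      exact JoinedIn.mono (hα.joinedIn pp (left_mem_segment _ _ _) q hq)
        fun x hx => Or.inr hx

lemma not_lpc_at (y : ↥Yset) (hyα : (y : ℝ × ℝ) ∈ alphaSet) (hy0 : (y : ℝ × ℝ) ≠ (0, 0)) :
    ¬ (∀ U ∈ 𝓝 y, ∃ V ∈ 𝓝 y, V ⊆ U ∧ IsPathConnected V) := by
  intro h
  obtain ⟨h1, h2, h3⟩ := mem_alphaSet_iff.mp hyα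
  set t := ((y : ℝ × ℝ)).2 with ht_def
  have ht : 0 < t := by
    rcases lt_or_eq_of_le h2 with h' | h'
    · exact h'
    · exact absurd (Prod.ext h1 h'.symm) hy0
  have hyval : ((y : ℝ × ℝ)) = (0, t) := Prod.ext h1 rfl
  obtain ⟨V, hV, hVU, hVpc⟩ := h (Metric.ball y (t / 2))
    (Metric.ball_mem_nhds y (by positivity))
  obtain ⟨ε, hε, hball⟩ := Metric.mem_nhds_iff.mp hV
  obtain ⟨n, hn⟩ := exists_nat_gt (max 2 (t / ε))
  have hn2 : 2 ≤ n := by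
    have h' : (2 : ℝ) < n := lt_of_le_of_lt (le_max_left _ _) hn
    exact_mod_cast h'.le
  have hn' : (2 : ℝ) ≤ (n : ℝ) := by exact_mod_cast hn2
  have hnpos : (0 : ℝ) < n := by linarith
  have htn : t / n < ε := by
    have h4 : t / ε < n := lt_of_le_of_lt (le_max_right _ _) hn
    rw [div_lt_iff₀ hε] at h4
    rw [div_lt_iff₀ hnpos]
    nlinarith
  set z : ℝ × ℝ := (t / n, t) with hz_def
  have hz_seg : z ∈ segment ℝ pp (apex n) := by
    refine ⟨1 - t, t, by linarith, h2, by ring, ?_⟩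
    simp only [pp, apex, Prod.smul_mk, Prod.mk_add_mk, smul_eq_mul, hz_def]
    rw [Prod.ext_iff]
    constructor <;> · simp; try ring
  have hzY : z ∈ Yset :=
    X_sub_Y (Set.mem_biUnion (show n ∈ {k : ℕ | 2 ≤ k} from hn2) (Or.inl (Or.inl hz_seg)))
  set zY : ↥Yset := ⟨z, hzY⟩ with hzY_def
  have hdz : dist zY y < ε := by
    rw [Subtype.dist_eq]
    show dist z ((y : ℝ × ℝ)) < ε
    rw [hyval, hz_def, Prod.dist_eq]
    simp only [Real.dist_eq]
    rw [sub_self, abs_zero, sub_zero, abs_of_nonneg (by positivity : (0:ℝ) ≤ t / n),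
      max_eq_left (by positivity : (0:ℝ) ≤ t / n)]
    exact htn
  have hzV : zY ∈ V := hball (Metric.mem_ball.mpr hdz)
  have hyV : y ∈ V := mem_of_mem_nhds hV
  obtain ⟨γ, hγ⟩ := hVpc.joinedIn zY hzV y hyV
  set K : Set (ℝ × ℝ) := Set.range fun s => ((γ s : ↥Yset) : ℝ × ℝ) with hK
  have hKconn : IsPreconnected K :=
    isPreconnected_range (continuous_subtype_val.comp γ.continuous)
  have hKY : ∀ q ∈ K, q ∈ Yset := by rintro q ⟨s, rfl⟩; exact (γ s).2
  have hKU : ∀ q ∈ K, dist q ((y : ℝ × ℝ)) < t / 2 := by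
    rintro q ⟨s, rfl⟩
    have h5 := hVU (hγ s)
    rw [Metric.mem_ball, Subtype.dist_eq] at h5
    exact h5
  have hppK : pp ∉ K := by
    intro hp
    have h6 := hKU pp hp
    rw [hyval, pp, Prod.dist_eq] at h6
    simp only [Real.dist_eq, sub_self, abs_zero, zero_sub, abs_neg,
      abs_of_nonneg ht.le] at h6
    rw [max_eq_right ht.le] at h6
    linarith
  set R : Set (ℝ × ℝ) := alphaSet ∪ ⋃ m ∈ {m : ℕ | 2 ≤ m ∧ m ≠ n}, Cset m with hR
  have hRclosed : IsClosed R := isClosed_union_general _ fun m hm => hm.1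
  have hKsub : K ⊆ Cset n ∪ R := by
    intro q hq
    rcases hKY q hq with hx | hα
    · simp only [Xset, Set.mem_iUnion, exists_prop] at hx
      obtain ⟨m, hm2, hc⟩ := hx
      by_cases hmn : m = n
      · exact Or.inl (hmn ▸ hc)
      · exact Or.inr (Or.inr (Set.mem_biUnion (show m ∈ {m : ℕ | 2 ≤ m ∧ m ≠ n} from
          ⟨hm2, hmn⟩) hc))
    · exact Or.inr (Or.inl hα)
  have hzK : z ∈ K := ⟨0, by show ((γ 0 : ↥Yset) : ℝ × ℝ) = z; rw [γ.source]⟩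
  have hyK : ((y : ℝ × ℝ)) ∈ K :=
    ⟨1, by show ((γ 1 : ↥Yset) : ℝ × ℝ) = ((y : ℝ × ℝ)); rw [γ.target]⟩
  obtain ⟨q, hqK, hqC, hqR⟩ := isPreconnected_closed_iff.mp hKconn (Cset n) R
    (isCompact_Cset n).isClosed hRclosed hKsub
    ⟨z, hzK, Or.inl (Or.inl hz_seg)⟩ ⟨((y : ℝ × ℝ)), hyK, Or.inl hyα⟩
  rcases hqR with hα | hx
  · rw [Cset_inter_alpha hn2 hqC hα] at hqK
    exact hppK hqK
  · simp only [Set.mem_iUnion, exists_prop, Set.mem_setOf_eq] at hx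
    obtain ⟨m, ⟨hm2, hmn⟩, hc⟩ := hx
    rw [Cset_inter_Cset hn2 hm2 (fun he => hmn he.symm) hqC hc] at hqK
    exact hppK hqK


/-- `Y = X ∪ α` is compact and path connected, but not locally path
connected; indeed local path connectedness fails at every point of `α` other
than `(0,0)`. -/
theorem Yset_compact_pathConnected_not_locPathConnected :
    IsCompact Yset ∧ IsPathConnected Yset ∧
    ¬ LocPathConnectedSpace ↥Yset ∧
    ∀ y : ↥Yset, (y : ℝ × ℝ) ∈ alphaSet → (y : ℝ × ℝ) ≠ (0, 0) →
      ¬ (∀ U ∈ 𝓝 y, ∃ V ∈ 𝓝 y, V ⊆ U ∧ IsPathConnected V) := by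
  refine ⟨isCompact_Yset, isPathConnected_Yset, ?_, not_lpc_at⟩
  intro hlpc
  have hmem : ((0 : ℝ), (1 : ℝ)) ∈ alphaSet := right_mem_segment _ _ _
  refine not_lpc_at ⟨((0:ℝ), (1:ℝ)), Or.inr hmem⟩ hmem (by norm_num [Prod.ext_iff]) ?_
  intro U hU
  obtain ⟨s, ⟨hs1, hs2⟩, hsU⟩ := (@path_connected_basis _ _ hlpc _).mem_iff.mp hU
  exact ⟨s, hs1, hsU, hs2⟩
end
end

section
/- A loop f in the bouquet X = ⋃_{n≥2} C_n based at p = (0,0) is null-homotopic in X if and only if it is null-homotopic in Y = X ∪ α, where α is the segment from (0,0) to (0,1). -/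
open unitInterval Topology

noncomputable section

def dlt (n : ℕ) : ℝ := ((10 : ℝ) ^ (10 * n))⁻¹

lemma dlt_pos (n : ℕ) : 0 < dlt n := by
  have : (0:ℝ) < (10:ℝ) ^ (10*n) := by positivity
  exact inv_pos.mpr this

lemma cube_dlt (n : ℕ) : (n : ℝ)^3 * dlt n < 1 := by
  have h1 : (n:ℕ)^3 < 10 ^ (10*n) := by
    calc n^3 < (10^n)^3 := by
          exact Nat.pow_lt_pow_left (Nat.lt_pow_self (n := n) (a := 10) (by norm_num)) (by norm_num)
      _ = 10^(3*n) := by rw [← pow_mul, Nat.mul_comm]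
      _ ≤ 10^(10*n) := Nat.pow_le_pow_right (by norm_num) (by omega)
  have h2 : ((n:ℝ))^3 < 10 ^ (10*n) := by exact_mod_cast h1
  have h3 : (0:ℝ) < 10 ^ (10*n) := by positivity
  rw [dlt, mul_inv_lt_iff₀ h3, one_mul]
  exact h2

def cnn (n : ℕ) : ℝ := 1 / n + dlt n * n
def KK (n : ℕ) : ℝ := cnn n / (1 - dlt n)

lemma dlt_cube (n : ℕ) : dlt n * (n:ℝ)^3 < 1 := by
  have h := cube_dlt n; linarith [mul_comm (dlt n) ((n:ℝ)^3), (by ring : dlt n * (n:ℝ)^3 = (n:ℝ)^3 * dlt n)]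

lemma dlt_le_half (n : ℕ) (hn : 2 ≤ n) : dlt n ≤ 1/2 := by
  have h := dlt_cube n
  have hn8 : (8:ℝ) ≤ (n:ℝ)^3 := by
    have h2 : (2:ℝ) ≤ (n:ℝ) := by exact_mod_cast hn
    nlinarith [sq_nonneg ((n:ℝ)-2), sq_nonneg (n:ℝ)]
  nlinarith [mul_nonneg (by linarith : (0:ℝ) ≤ (n:ℝ)^3 - 8) (le_of_lt (dlt_pos n))]

lemma one_sub_dlt (n : ℕ) (hn : 2 ≤ n) : 1/2 ≤ 1 - dlt n := by
  have := dlt_le_half n hn; linarith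

lemma cnn_pos (n : ℕ) (hn : 2 ≤ n) : 0 < cnn n := by
  have : (0:ℝ) < n := by exact_mod_cast Nat.lt_of_lt_of_le (by norm_num) hn
  have := dlt_pos n
  unfold cnn; positivity

lemma KK_pos (n : ℕ) (hn : 2 ≤ n) : 0 < KK n :=
  div_pos (cnn_pos n hn) (by linarith [one_sub_dlt n hn])

lemma KK_ge (n : ℕ) (hn : 2 ≤ n) : 1/(n:ℝ) ≤ KK n := by
  have hpos : (0:ℝ) < n := by exact_mod_cast Nat.lt_of_lt_of_le (by norm_num) hn
  have h1 := one_sub_dlt n hn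
  have h2 := dlt_pos n
  rw [KK, le_div_iff₀ (by linarith)]
  have : (0:ℝ) ≤ dlt n * n := by positivity
  have hh : 1/(n:ℝ) * (1 - dlt n) ≤ 1/n := by
    have : (0:ℝ) < 1/(n:ℝ) := by positivity
    nlinarith
  unfold cnn; linarith

lemma KK_le (n : ℕ) (hn : 2 ≤ n) : KK n ≤ 2/(n:ℝ) := by
  have hpos : (2:ℝ) ≤ n := by exact_mod_cast hn
  have h1 := one_sub_dlt n hn
  have h2 := dlt_pos n
  have h4 := dlt_cube n
  rw [KK, div_le_div_iff₀ (by linarith) (by linarith)]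
  unfold cnn
  have hinv : 1/(n:ℝ) * (n:ℝ) = 1 := by field_simp
  nlinarith [mul_pos (dlt_pos n) (by linarith : (0:ℝ) < (n:ℝ))]

lemma KK_lt (n m : ℕ) (hn : 2 ≤ n) (hm : n < m) : KK m < 1/(n:ℝ) := by
  have hn2 : (2:ℝ) ≤ n := by exact_mod_cast hn
  have hmn : (n:ℝ) + 1 ≤ m := by exact_mod_cast hm
  have hmpos : (0:ℝ) < m := by linarith
  have h1 := one_sub_dlt m (by omega)
  have h2 := dlt_pos m
  have h4 := dlt_cube m
  have key : KK m < 1/((m:ℝ)-1) := by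
    rw [KK, div_lt_div_iff₀ (by linarith) (by linarith)]
    unfold cnn
    have hinv : 1/(m:ℝ) * (m:ℝ) = 1 := by field_simp
    nlinarith [mul_pos (dlt_pos m) (by linarith : (0:ℝ) < (m:ℝ)),
      mul_pos (mul_pos (dlt_pos m) (by linarith : (0:ℝ) < (m:ℝ))) (by linarith : (0:ℝ) < (m:ℝ))]
  have : 1/((m:ℝ)-1) ≤ 1/(n:ℝ) := by
    apply div_le_div_of_nonneg_left (by norm_num) (by linarith) (by linarith)
  linarith

lemma mem_segment_coords {u v z : ℝ × ℝ} (h : z ∈ segment ℝ u v) :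
    ∃ t : ℝ, 0 ≤ t ∧ t ≤ 1 ∧ z.1 = (1-t)*u.1 + t*v.1 ∧ z.2 = (1-t)*u.2 + t*v.2 := by
  rw [segment_eq_image] at h
  obtain ⟨t, ht, rfl⟩ := h
  exact ⟨t, ht.1, ht.2, by simp [Prod.fst_add, Prod.smul_fst, smul_eq_mul],
    by simp [Prod.snd_add, Prod.smul_snd, smul_eq_mul]⟩

lemma apex'_eq_s15 (n : ℕ) : apex' n = (cnn n, 1 - dlt n) := by
  simp only [apex', apex, cnn, dlt, Prod.ext_iff, Prod.fst_add, Prod.snd_add,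
    Prod.smul_fst, Prod.smul_snd, smul_eq_mul]
  exact ⟨trivial, by ring⟩

/-- Fundamental bounds on points of the `n`-th triangle. -/
lemma C_bounds {n : ℕ} (hn : 2 ≤ n) {z : ℝ × ℝ} (hz : z ∈ Cset n) :
    0 ≤ z.2 ∧ z.2 ≤ 1 ∧ z.2 / n ≤ z.1 ∧ z.1 ≤ z.2 * KK n := by
  have hnp : (0:ℝ) < n := by exact_mod_cast Nat.lt_of_lt_of_le (by norm_num) hn
  have hd := dlt_pos n
  have hdh := dlt_le_half n hn
  have hcp := cnn_pos n hn
  have hK := KK_ge n hn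
  have hKpos := KK_pos n hn
  have hsd := one_sub_dlt n hn
  have hKdef : KK n * (1 - dlt n) = cnn n := by
    rw [KK, div_mul_cancel₀]
    linarith
  rcases hz with (h | h) | h
  · obtain ⟨t, ht0, ht1, h1, h2⟩ := mem_segment_coords h
    simp only [pp, apex] at h1 h2
    rw [h1, h2]
    have e1 : (1-t)*(0:ℝ) + t * (1/n) = t/n := by ring
    have e2 : (1-t)*(0:ℝ) + t * 1 = t := by ring
    rw [e1, e2]
    refine ⟨ht0, ht1, le_refl _, ?_⟩
    calc t/n = t * (1/n) := by ring
      _ ≤ t * KK n := by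
        apply mul_le_mul_of_nonneg_left hK ht0
  · obtain ⟨t, ht0, ht1, h1, h2⟩ := mem_segment_coords h
    rw [apex'_eq_s15] at h1 h2
    simp only [apex] at h1 h2
    rw [h1, h2]
    have hz1 : (1-t)*(1/(n:ℝ)) + t * cnn n = 1/n + t * (dlt n * n) := by
      rw [cnn]; ring
    have hz2 : (1-t)*(1:ℝ) + t * (1 - dlt n) = 1 - t * dlt n := by ring
    rw [hz1, hz2]
    have htd : t * dlt n ≤ dlt n := by nlinarith
    have htd0 : 0 ≤ t * dlt n := by positivity
    have htdn : 0 ≤ t * (dlt n * n) := by positivity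
    refine ⟨by linarith, by linarith, ?_, ?_⟩
    · rw [div_le_iff₀ hnp]
      have : (1/(n:ℝ)) * n = 1 := by field_simp
      nlinarith
    · have h5 : 1/(n:ℝ) + t * (dlt n * n) ≤ cnn n := by rw [cnn]; nlinarith
      have h6 : cnn n = KK n * (1 - dlt n) := hKdef.symm
      have h7 : KK n * (1 - dlt n) ≤ KK n * (1 - t * dlt n) := by
        apply mul_le_mul_of_nonneg_left (by linarith) (le_of_lt hKpos)
      calc 1/(n:ℝ) + t * (dlt n * n) ≤ cnn n := h5
        _ = KK n * (1 - dlt n) := h6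
        _ ≤ KK n * (1 - t * dlt n) := h7
        _ = (1 - t * dlt n) * KK n := by ring
  · obtain ⟨t, ht0, ht1, h1, h2⟩ := mem_segment_coords h
    rw [apex'_eq_s15] at h1 h2
    simp only [pp] at h1 h2
    rw [h1, h2]
    have e1 : (1-t)*cnn n + t * 0 = (1-t) * cnn n := by ring
    have e2 : (1-t)*(1 - dlt n) + t * 0 = (1-t) * (1 - dlt n) := by ring
    rw [e1, e2]
    have h1t : 0 ≤ 1 - t := by linarith
    refine ⟨by nlinarith, by nlinarith, ?_, ?_⟩
    · rw [div_le_iff₀ hnp]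
      have hcn : 1/(n:ℝ) ≤ cnn n := by rw [cnn]; nlinarith
      have hinv : 1/(n:ℝ) * n = 1 := by field_simp
      have hc1 : 1 ≤ cnn n * n := by nlinarith
      nlinarith [mul_nonneg h1t (by linarith : (0:ℝ) ≤ cnn n * n - (1 - dlt n))]
    · have : (1-t) * (1 - dlt n) * KK n = (1-t) * (KK n * (1 - dlt n)) := by ring
      rw [this, hKdef]

lemma C_fst_zero {n : ℕ} (hn : 2 ≤ n) {z : ℝ × ℝ} (hz : z ∈ Cset n) (h0 : z.1 = 0) :
    z = pp := by
  obtain ⟨h1, h2, h3, h4⟩ := C_bounds hn hz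
  have hnp : (0:ℝ) < n := by exact_mod_cast Nat.lt_of_lt_of_le (by norm_num) hn
  have : z.2 = 0 := by
    rw [h0] at h3
    have := (div_nonpos_iff.mp (by linarith : z.2 / n ≤ 0))
    rcases this with ⟨ha, hb⟩ | ⟨ha, hb⟩
    · linarith
    · linarith
  exact Prod.ext h0 this

lemma C_disjoint {n m : ℕ} (hn : 2 ≤ n) (hm : 2 ≤ m) (hnm : n ≠ m) {z : ℝ × ℝ}
    (hzn : z ∈ Cset n) (hzm : z ∈ Cset m) : z = pp := by
  -- wlog n < m
  wlog h : n < m generalizing n m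
  · exact this hm hn (Ne.symm hnm) hzm hzn (by omega)
  obtain ⟨h1, h2, h3, h4⟩ := C_bounds hn hzn
  obtain ⟨_, _, _, h8⟩ := C_bounds hm hzm
  have hK := KK_lt n m hn h
  have hnp : (0:ℝ) < n := by exact_mod_cast Nat.lt_of_lt_of_le (by norm_num) hn
  have hz2 : z.2 = 0 := by
    by_contra hne
    have hpos : 0 < z.2 := lt_of_le_of_ne h1 (Ne.symm hne)
    have : z.2 / n ≤ z.2 * KK m := le_trans h3 h8
    rw [div_le_iff₀ hnp] at this
    have h9 := mul_lt_mul_of_pos_left hK hpos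
    have h10 := mul_lt_mul_of_pos_right h9 hnp
    have h11 : z.2 * (1/(n:ℝ)) * n = z.2 := by field_simp
    linarith
  apply C_fst_zero hn hzn
  have : z.1 ≤ 0 := by
    have := h8; rw [hz2] at this; linarith [KK_pos m hm]
  have h3' := h3; rw [hz2] at h3'
  simp at h3'
  linarith

lemma mem_alpha_iff {z : ℝ × ℝ} : z ∈ alphaSet ↔ z.1 = 0 ∧ 0 ≤ z.2 ∧ z.2 ≤ 1 := by
  constructor
  · intro h
    obtain ⟨t, ht0, ht1, h1, h2⟩ := mem_segment_coords h
    simp only at h1 h2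
    constructor
    · rw [h1]; ring
    · rw [h2]; constructor <;> nlinarith
  · rintro ⟨h1, h2, h3⟩
    rw [alphaSet, segment_eq_image]
    refine ⟨z.2, ⟨h2, h3⟩, ?_⟩
    have he : (1 - z.2) • ((0:ℝ),(0:ℝ)) + z.2 • ((0:ℝ),(1:ℝ)) = ((0:ℝ), z.2) := by
      apply Prod.ext <;> simp
    show (1 - z.2) • ((0:ℝ),(0:ℝ)) + z.2 • ((0:ℝ),(1:ℝ)) = z
    rw [he]
    exact Prod.ext_iff.mpr ⟨h1.symm, rfl⟩

lemma mem_X_iff {z : ℝ × ℝ} : z ∈ Xset ↔ ∃ n, 2 ≤ n ∧ z ∈ Cset n := by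
  simp [Xset, Set.mem_iUnion₂]

lemma X_inter_alpha {z : ℝ × ℝ} (hX : z ∈ Xset) (hA : z ∈ alphaSet) : z = pp := by
  obtain ⟨n, hn, hzn⟩ := mem_X_iff.mp hX
  exact C_fst_zero hn hzn (mem_alpha_iff.mp hA).1

lemma isClosed_seg (u v : ℝ × ℝ) : IsClosed (segment ℝ u v) := by
  rw [segment_eq_image]
  apply IsCompact.isClosed
  apply IsCompact.image isCompact_Icc
  continuity

lemma isClosed_C (n : ℕ) : IsClosed (Cset n) :=
  ((isClosed_seg _ _).union (isClosed_seg _ _)).union (isClosed_seg _ _)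

lemma C_nonempty (n : ℕ) : (Cset n).Nonempty := ⟨pp, pp_mem_C n⟩

lemma C_fst_pos {n : ℕ} (hn : 2 ≤ n) {z : ℝ × ℝ} (hz : z ∈ Cset n) (h0 : z.1 ≠ 0) :
    0 < z.1 := by
  obtain ⟨h1, _, h3, _⟩ := C_bounds hn hz
  have hnp : (0:ℝ) < n := by exact_mod_cast Nat.lt_of_lt_of_le (by norm_num) hn
  have : 0 ≤ z.1 := le_trans (by positivity) h3
  exact lt_of_le_of_ne this (Ne.symm h0)

lemma dist_fst_le' (w z : ℝ × ℝ) : dist w.1 z.1 ≤ dist w z := by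
  rw [Prod.dist_eq]; exact le_max_left _ _

/-- Each point of an arm away from `α` has a `Y`-neighborhood inside the arm. -/
lemma arm_open {n : ℕ} (hn : 2 ≤ n) {z : ℝ × ℝ} (hz : z ∈ Cset n) (h0 : z.1 ≠ 0) :
    ∃ r > 0, ∀ w ∈ Yset, dist w z < r → w ∈ Cset n := by
  have hz1 : 0 < z.1 := C_fst_pos hn hz h0
  obtain ⟨M, hM⟩ := exists_nat_gt (4 / z.1)
  set S : Finset ℕ := (Finset.range (M+1)).filter (fun m => 2 ≤ m ∧ m ≠ n) with hS
  have hzn : z ≠ pp := by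
    intro h; rw [h] at hz1; simp [pp] at hz1
  have hpos : ∀ m ∈ S, 0 < Metric.infDist z (Cset m) := by
    intro m hm
    rw [hS, Finset.mem_filter] at hm
    obtain ⟨_, hm2, hmn⟩ := hm
    apply ((isClosed_C m).notMem_iff_infDist_pos (C_nonempty m)).mp
    intro hzm
    exact hzn (C_disjoint hn hm2 (Ne.symm hmn) hz hzm)
  set r : ℝ := min (z.1/2) (if h : S.Nonempty then S.inf' h (fun m => Metric.infDist z (Cset m)) else 1) with hr
  have hrpos : 0 < r := by
    apply lt_min (by linarith)
    split_ifs with h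
    · rw [Finset.lt_inf'_iff]
      exact hpos
    · norm_num
  refine ⟨r, hrpos, ?_⟩
  rintro w hw hdist
  have hfst : dist w.1 z.1 ≤ dist w z := dist_fst_le' w z
  rcases hw with hwX | hwA
  · obtain ⟨m, hm2, hwm⟩ := mem_X_iff.mp hwX
    by_cases hmn : m = n
    · rwa [hmn] at hwm
    rcases le_or_gt m M with hmM | hMm
    · have hmS : m ∈ S := by
        rw [hS, Finset.mem_filter, Finset.mem_range]
        exact ⟨by omega, hm2, hmn⟩
      have h1 : Metric.infDist z (Cset m) ≤ dist z w := Metric.infDist_le_dist_of_mem hwm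
      have h2 : r ≤ Metric.infDist z (Cset m) := by
        rw [hr]
        apply le_trans (min_le_right _ _)
        rw [dif_pos ⟨m, hmS⟩]
        exact Finset.inf'_le _ hmS
      rw [dist_comm] at h1
      linarith
    · obtain ⟨hw1, hw2, _, hw4⟩ := C_bounds hm2 hwm
      have hmp : (0:ℝ) < m := by exact_mod_cast Nat.lt_of_lt_of_le (by norm_num) hm2
      have hKm := KK_pos m hm2
      have hwle : w.1 ≤ 2/(m:ℝ) := by
        calc w.1 ≤ w.2 * KK m := hw4
          _ ≤ 1 * KK m := by nlinarith
          _ = KK m := one_mul _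
          _ ≤ 2/m := KK_le m hm2
      have hMm' : (4:ℝ)/z.1 < m := by
        have : (M:ℝ) < m := by exact_mod_cast hMm
        linarith
      have h2m : 2/(m:ℝ) < z.1/2 := by
        rw [div_lt_div_iff₀ hmp (by norm_num : (0:ℝ) < 2)]
        rw [div_lt_iff₀ (by linarith : (0:ℝ) < z.1)] at hMm'
        linarith
      have habs : z.1 - w.1 ≤ |w.1 - z.1| := by
        rw [abs_sub_comm]; exact le_abs_self _
      rw [Real.dist_eq] at hfst
      have : r ≤ z.1/2 := min_le_left _ _
      linarith
  · have hw1 : w.1 = 0 := (mem_alpha_iff.mp hwA).1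
    rw [Real.dist_eq, hw1] at hfst
    have : z.1 ≤ |0 - z.1| := by rw [abs_sub_comm, sub_zero]; exact le_abs_self _
    have hrle : r ≤ z.1/2 := min_le_left _ _
    linarith

lemma dist_snd_le' (w z : ℝ × ℝ) : dist w.2 z.2 ≤ dist w z := by
  rw [Prod.dist_eq]; exact le_max_right _ _

/-- A connected subset of `Y` inside a small ball around a point of `α \ {p}`
lies entirely in `α`. -/
lemma connected_near_alpha {a : ℝ × ℝ} (ha : a ∈ alphaSet) (hap : a ≠ pp)
    {T : Set (ℝ × ℝ)} (hT : IsPreconnected T) (hTY : T ⊆ Yset)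
    (hTB : T ⊆ Metric.ball a (a.2/2)) (haT : a ∈ T) : T ⊆ alphaSet := by
  obtain ⟨ha1, ha2, ha3⟩ := mem_alpha_iff.mp ha
  have ha2' : 0 < a.2 := by
    rcases lt_or_eq_of_le ha2 with h | h
    · exact h
    · exact absurd (Prod.ext_iff.mpr ⟨ha1, h.symm⟩ : a = pp) hap
  suffices hC : ∀ n, 2 ≤ n → T ∩ Cset n = ∅ by
    intro t ht
    rcases hTY ht with htX | htA
    · obtain ⟨n, hn, htn⟩ := mem_X_iff.mp htX
      exact absurd (Set.mem_inter ht htn) (by rw [hC n hn]; exact Set.notMem_empty t)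
    · exact htA
  intro n hn
  by_contra hne
  obtain ⟨z, hzT, hzC⟩ := Set.inter_nonempty.mp (Set.nonempty_iff_ne_empty.mpr hne)
  have hw : ∀ w ∈ T ∩ Cset n, ∃ r, 0 < r ∧ ∀ u ∈ Yset, dist u w < r → u ∈ Cset n := by
    rintro w ⟨hwT, hwC⟩
    have hwb := hTB hwT
    have hsnd : dist w.2 a.2 ≤ dist w a := dist_snd_le' w a
    rw [Metric.mem_ball] at hwb
    have hw2 : a.2/2 < w.2 := by
      rw [Real.dist_eq] at hsnd
      have := abs_sub_lt_iff.mp (lt_of_le_of_lt hsnd hwb)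
      linarith [this.2]
    have hw1 : w.1 ≠ 0 := by
      intro h
      have := C_fst_zero hn hwC h
      rw [this] at hw2
      simp [pp] at hw2
      linarith
    obtain ⟨r, hr, hprop⟩ := arm_open hn hwC hw1
    exact ⟨r, hr, hprop⟩
  set U : Set (ℝ × ℝ) :=
    {x | ∃ w ∈ T ∩ Cset n, ∃ r, 0 < r ∧ (∀ u ∈ Yset, dist u w < r → u ∈ Cset n) ∧ dist x w < r}
    with hU
  have hUopen : IsOpen U := by
    rw [Metric.isOpen_iff]
    rintro x ⟨w, hwT, r, hr, hprop, hx⟩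
    refine ⟨r - dist x w, by linarith, ?_⟩
    intro y hy
    rw [Metric.mem_ball] at hy
    exact ⟨w, hwT, r, hr, hprop, by
      calc dist y w ≤ dist y x + dist x w := dist_triangle _ _ _
        _ < r := by linarith⟩
  have hmemU : ∀ w ∈ T ∩ Cset n, w ∈ U := by
    intro w hwmem
    obtain ⟨r, hr, hprop⟩ := hw w hwmem
    exact ⟨w, hwmem, r, hr, hprop, by simp [hr]⟩
  have hcover : T ⊆ U ∪ (Cset n)ᶜ := by
    intro t ht
    by_cases htC : t ∈ Cset n
    · exact Or.inl (hmemU t ⟨ht, htC⟩)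
    · exact Or.inr htC
  have h1 : (T ∩ U).Nonempty := ⟨z, hzT, hmemU z ⟨hzT, hzC⟩⟩
  have h2 : (T ∩ (Cset n)ᶜ).Nonempty := by
    refine ⟨a, haT, ?_⟩
    intro haC
    exact hap (C_fst_zero hn haC ha1)
  obtain ⟨x, hxT, hxU, hxV⟩ := hT U (Cset n)ᶜ hUopen (isClosed_C n).isOpen_compl hcover h1 h2
  obtain ⟨w, hwT, r, hr, hprop, hxw⟩ := hxU
  exact hxV (hprop x (hTY hxT) hxw)


lemma e_inducing : Topology.IsInducing (fun q : I × I => ((q.1 : ℝ), (q.2 : ℝ))) := by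
  exact Topology.IsInducing.prodMap Topology.IsInducing.subtypeVal Topology.IsInducing.subtypeVal

lemma dist_e (q s : I × I) :
    dist q s = dist ((q.1 : ℝ), (q.2 : ℝ)) ((s.1 : ℝ), (s.2 : ℝ)) := by
  rw [Prod.dist_eq, Prod.dist_eq, Subtype.dist_eq, Subtype.dist_eq]

lemma preconnected_ball_II (s : I × I) (r : ℝ) :
    IsPreconnected (Metric.ball s r) := by
  set e : I × I → ℝ × ℝ := fun q => ((q.1 : ℝ), (q.2 : ℝ)) with he
  rw [← e_inducing.isPreconnected_image]
  have hball : Metric.ball s r = e ⁻¹' Metric.ball (e s) r := by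
    ext q
    simp only [Metric.mem_ball, Set.mem_preimage, he]
    rw [dist_e]
  rw [hball, Set.image_preimage_eq_inter_range]
  have hrange : Set.range e = (Set.Icc (0:ℝ) 1) ×ˢ (Set.Icc (0:ℝ) 1) := by
    rw [he]
    have : (fun q : I × I => ((q.1 : ℝ), (q.2 : ℝ))) = Prod.map (fun x : I => (x:ℝ)) (fun x : I => (x:ℝ)) := rfl
    rw [this, Set.range_prodMap, Subtype.range_coe]
  rw [hrange]
  exact ((convex_ball (e s) r).inter ((convex_Icc (0:ℝ) 1).prod (convex_Icc (0:ℝ) 1))).isPreconnected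

/-- a loop in the bouquet `X` based at `p` is null-homotopic in `X`
if and only if it is null-homotopic in `Y = X ∪ α`. -/
theorem nullhomotopic_in_X_iff_nullhomotopic_in_Y (f : Path pX pX) :
    f.Homotopic (Path.refl pX) ↔
      (f.map jXY.continuous).Homotopic (Path.refl (jXY pX)) := by
  constructor
  · intro h
    have h2 := Path.Homotopic.map h jXY
    have he : (Path.refl pX).map jXY.continuous = Path.refl (jXY pX) := by
      ext t <;> rfl
    rwa [he] at h2
  · rintro ⟨H⟩
    classical
    set F : I × I → ℝ × ℝ := fun q => ((H q : ↥Yset) : ℝ × ℝ) with hF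
    have hFcont : Continuous F := continuous_subtype_val.comp H.continuous
    have hFY : ∀ q, F q ∈ Yset := fun q => (H q).2
    set G : I × I → ℝ × ℝ := fun q => if F q ∈ alphaSet then pp else F q with hG
    have hGX : ∀ q, G q ∈ Xset := by
      intro q
      by_cases hq : F q ∈ alphaSet
      · simp only [hG, if_pos hq]; exact pp_mem_X
      · simp only [hG, if_neg hq]
        rcases hFY q with h | h
        · exact h
        · exact absurd h hq
    have hG_eq : ∀ (q : I × I) (x : ↥Xset), F q = (x : ℝ × ℝ) → G q = (x : ℝ × ℝ) := by
      intro q x hx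
      by_cases hq : F q ∈ alphaSet
      · have hxp : (x : ℝ × ℝ) = pp := X_inter_alpha x.2 (hx ▸ hq)
        simp only [hG, if_pos hq, hxp]
      · simp only [hG, if_neg hq, hx]
    have hGcont : Continuous G := by
      rw [continuous_iff_continuousAt]
      intro s
      by_cases hα : F s ∈ alphaSet
      · by_cases hpp : F s = pp
        · rw [Metric.continuousAt_iff]
          intro ε hε
          obtain ⟨δ, hδ, hd⟩ := Metric.continuousAt_iff.mp hFcont.continuousAt ε hε
          refine ⟨δ, hδ, ?_⟩
          intro x hx
          have hGs : G s = pp := by simp only [hG, if_pos hα]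
          rw [hGs]
          by_cases hxα : F x ∈ alphaSet
          · have : G x = pp := by simp only [hG, if_pos hxα]
            rw [this]; simpa using hε
          · have hGx : G x = F x := by simp only [hG, if_neg hxα]
            rw [hGx, ← hpp]
            exact hd hx
        · have ha2 : 0 < (F s).2 := by
            obtain ⟨h1, h2, h3⟩ := mem_alpha_iff.mp hα
            rcases lt_or_eq_of_le h2 with h | h
            · exact h
            · exact absurd (Prod.ext_iff.mpr ⟨h1, h.symm⟩) hpp
          have hW : F ⁻¹' (Metric.ball (F s) ((F s).2/2)) ∈ 𝓝 s :=
            hFcont.continuousAt.preimage_mem_nhds (Metric.ball_mem_nhds _ (by linarith))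
          obtain ⟨r, hr, hball⟩ := Metric.mem_nhds_iff.mp hW
          have hT : F '' (Metric.ball s r) ⊆ alphaSet := by
            apply connected_near_alpha hα hpp
            · exact (preconnected_ball_II s r).image F hFcont.continuousOn
            · rintro _ ⟨q, _, rfl⟩; exact hFY q
            · rintro _ ⟨q, hq, rfl⟩; exact hball hq
            · exact ⟨s, Metric.mem_ball_self hr, rfl⟩
          apply ContinuousAt.congr (continuousAt_const : ContinuousAt (fun _ : I × I => pp) s)
          filter_upwards [Metric.ball_mem_nhds s hr] with x hx
          show pp = G x
          exact (if_pos (hT ⟨x, hx, rfl⟩)).symm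
      · have hU : F ⁻¹' alphaSetᶜ ∈ 𝓝 s :=
          hFcont.continuousAt.preimage_mem_nhds ((isClosed_seg (0,0) (0,1)).isOpen_compl.mem_nhds hα)
        apply ContinuousAt.congr hFcont.continuousAt
        filter_upwards [hU] with x hx
        exact (if_neg hx).symm
    refine ⟨⟨⟨⟨fun q => ⟨G q, hGX q⟩, hGcont.subtype_mk hGX⟩, ?_, ?_⟩, ?_⟩⟩
    · intro t
      apply Subtype.ext
      exact hG_eq (0, t) (f t) (congrArg Subtype.val (H.apply_zero t))
    · intro t
      apply Subtype.ext
      exact hG_eq (1, t) pX (congrArg Subtype.val (H.apply_one t))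
    · intro t x hx
      apply Subtype.ext
      exact hG_eq (t, x) (f x) (congrArg Subtype.val (H.eq_fst t hx))
end
end
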